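/- Let m ≥ 0, β ∈ ℝ, τ > 0, and let u, v : [0,τ] → ℂ satisfy d/ds|u(s)|² ≤ m(|u|²+|v|²) + 4|β||u|²|v|², d/ds|v(s)|² ≤ m(|u|²+|v|²) + 4|β||u|²|v|², and |u(s)|² + |v(s)|² = |u(0)|² + |v(0)|² for all s ∈ [0,τ]. Writing 𝔰 = |u(0)|² + |v(0)|², then for all s ∈ [0,τ]: |u(s)|²·|v(s)|² ≤ exp(4|β|·𝔰·τ)·(|u(0)|²·|v(0)|² + m·𝔰²·τ). -/

import Mathlib

theorem stmt2 (m β τ : ℝ) (hm : 0 ≤ m) (hτ : 0 < τ) (u v : ℝ → ℂ) (fu fv : ℝ → ℝ)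
    (hu : ∀ s ∈ Set.Icc (0:ℝ) τ, HasDerivAt (fun t => ‖u t‖^2) (fu s) s)
    (hv : ∀ s ∈ Set.Icc (0:ℝ) τ, HasDerivAt (fun t => ‖v t‖^2) (fv s) s)
    (hfu : ∀ s ∈ Set.Icc (0:ℝ) τ,
      fu s ≤ m * (‖u s‖^2 + ‖v s‖^2) + 4 * |β| * ‖u s‖^2 * ‖v s‖^2)
    (hfv : ∀ s ∈ Set.Icc (0:ℝ) τ,
      fv s ≤ m * (‖u s‖^2 + ‖v s‖^2) + 4 * |β| * ‖u s‖^2 * ‖v s‖^2)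
    (hcons : ∀ s ∈ Set.Icc (0:ℝ) τ, ‖u s‖^2 + ‖v s‖^2 = ‖u 0‖^2 + ‖v 0‖^2) :
    ∀ s ∈ Set.Icc (0:ℝ) τ,
      ‖u s‖^2 * ‖v s‖^2 ≤
        Real.exp (4 * |β| * (‖u 0‖^2 + ‖v 0‖^2) * τ) *
          (‖u 0‖^2 * ‖v 0‖^2 + m * (‖u 0‖^2 + ‖v 0‖^2)^2 * τ) := by
  set S : ℝ := ‖u 0‖^2 + ‖v 0‖^2 with hS
  have hS0 : 0 ≤ S := by positivity
  set K : ℝ := 4 * |β| * S with hK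
  have hK0 : 0 ≤ K := by positivity
  set ε : ℝ := m * S^2 with hε
  have hε0 : 0 ≤ ε := by positivity
  set g : ℝ → ℝ := fun t => ‖u t‖^2 * ‖v t‖^2 with hg
  set g' : ℝ → ℝ := fun t => fu t * ‖v t‖^2 + ‖u t‖^2 * fv t with hg'
  have hgd : ∀ s ∈ Set.Icc (0:ℝ) τ, HasDerivAt g (g' s) s := fun s hs =>
    (hu s hs).mul (hv s hs)
  have hgc : ContinuousOn g (Set.Icc (0:ℝ) τ) := fun s hs =>
    ((hgd s hs).continuousAt).continuousWithinAt
  have hgb : ∀ s ∈ Set.Ico (0:ℝ) τ, g' s ≤ K * g s + ε := by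
    intro s hs
    have hs' : s ∈ Set.Icc (0:ℝ) τ := Set.Ico_subset_Icc_self hs
    have h1 : fu s ≤ m * S + 4 * |β| * g s := by
      have := hfu s hs'; rw [hcons s hs'] at this
      simpa [hg, mul_assoc] using this
    have h2 : fv s ≤ m * S + 4 * |β| * g s := by
      have := hfv s hs'; rw [hcons s hs'] at this
      simpa [hg, mul_assoc] using this
    have hu0 : (0:ℝ) ≤ ‖u s‖^2 := by positivity
    have hv0 : (0:ℝ) ≤ ‖v s‖^2 := by positivity
    have hmain : g' s ≤ (m * S + 4 * |β| * g s) * (‖u s‖^2 + ‖v s‖^2) := by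
      show fu s * ‖v s‖^2 + ‖u s‖^2 * fv s ≤ _
      nlinarith [mul_le_mul_of_nonneg_right h1 hv0, mul_le_mul_of_nonneg_left h2 hu0]
    calc g' s ≤ (m * S + 4 * |β| * g s) * S := by rwa [hcons s hs'] at hmain
      _ = K * g s + ε := by ring
  have hgron := le_gronwallBound_of_liminf_deriv_right_le hgc
    (fun x hx r hr => by
      have hd := hgd x (Set.Ico_subset_Icc_self hx)
      have ht : Filter.Tendsto (fun z => (z - x)⁻¹ * (g z - g x)) (nhdsWithin x (Set.Ioi x))
          (nhds (g' x)) := by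
        have := (hasDerivAt_iff_tendsto_slope.1 hd).mono_left
          (nhdsWithin_mono x (fun z hz => ne_of_gt hz : Set.Ioi x ⊆ {x}ᶜ))
        exact this.congr (fun z => by rw [slope_def_field, div_eq_inv_mul])
      exact (ht.eventually_lt_const hr).frequently)
    (le_refl (g 0)) hgb
  intro s hs
  have hb := hgron s hs
  rw [sub_zero] at hb
  refine hb.trans ?_
  have hes : Real.exp (K * s) ≤ Real.exp (K * τ) :=
    Real.exp_le_exp.2 (mul_le_mul_of_nonneg_left hs.2 hK0)
  have hg00 : (0:ℝ) ≤ g 0 := by positivity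
  rcases eq_or_ne K 0 with h0 | h0
  · rw [h0, gronwallBound_K0]
    simp only [h0, zero_mul, Real.exp_zero, one_mul]
    have : ε * s ≤ ε * τ := mul_le_mul_of_nonneg_left hs.2 hε0
    simp only [hg]
    nlinarith [hs.2, hε0]
  · rw [gronwallBound_of_K_ne_0 h0]
    have hKpos : 0 < K := lt_of_le_of_ne hK0 (Ne.symm h0)
    have key : (Real.exp (K * s) - 1) / K ≤ s * Real.exp (K * s) := by
      rw [div_le_iff₀ hKpos]
      have hp := Real.exp_pos (K * s)
      have h := Real.add_one_le_exp (-(K * s))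
      rw [Real.exp_neg, inv_eq_one_div] at h
      have h' := (le_div_iff₀ hp).1 h
      nlinarith [h']
    have h2 : ε / K * (Real.exp (K * s) - 1) ≤ ε * (τ * Real.exp (K * τ)) := by
      have hsx : s * Real.exp (K * s) ≤ τ * Real.exp (K * τ) :=
        mul_le_mul hs.2 hes (Real.exp_pos _).le hτ.le
      have : ε / K * (Real.exp (K * s) - 1) = ε * ((Real.exp (K * s) - 1) / K) := by ring
      rw [this]
      exact mul_le_mul_of_nonneg_left (key.trans hsx) hε0
    have h1 : g 0 * Real.exp (K * s) ≤ g 0 * Real.exp (K * τ) :=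
      mul_le_mul_of_nonneg_left hes hg00
    calc g 0 * Real.exp (K * s) + ε / K * (Real.exp (K * s) - 1)
        ≤ g 0 * Real.exp (K * τ) + ε * (τ * Real.exp (K * τ)) := add_le_add h1 h2
      _ = Real.exp (K * τ) * (g 0 + ε * τ) := by ring
      _ = Real.exp (4 * |β| * S * τ) * (‖u 0‖^2 * ‖v 0‖^2 + m * S^2 * τ) := by
          simp [hg, hε, hK]
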